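/- Let 0 < ε ≤ 1/2, S > 0, and k ≥ 1, and let D be an instance with item sizes in (0, S]. Suppose some k-times packing of D_k uses B bins and at least B − k of these bins each have total size at least (1−ε)·S. Then B ≤ (1+2ε)·OPT(D_k) + k. Consequently, if the items of size greater than ε·S are packed into L bins and the items of size at most ε·S are then added greedily (each copy placed in an existing bin with enough room not already containing another copy of the same item, opening a new bin only when no such bin exists), the resulting packing of D_k uses at most max{ L, (1+2ε)·OPT(D_k) + k } bins. -/

import Mathlib

/-- One step of First-Fit insertion for `k`-times bin packing: insert (a copy of)
item `i` of size `d i` into the first bin that has enough remaining capacity and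
does not already contain another copy of item `i`; open a new bin otherwise. -/
noncomputable def ffInsertF {n : ℕ} (d : Fin n → ℝ) (S : ℝ) (i : Fin n) :
    List (Finset (Fin n)) → List (Finset (Fin n))
  | [] => [{i}]
  | b :: bs =>
      if (∑ j ∈ b, d j) + d i ≤ S ∧ i ∉ b then insert i b :: bs
      else b :: ffInsertF d S i bs

/-- `OPT(D_k)`: the minimum number `q` of bins of a `k`-times packing of the
instance `d : Fin n → ℝ`, i.e. of a `B : Fin q → Finset (Fin n)` with each bin of
total size at most `S` and each item in exactly `k` bins. -/
noncomputable def kOPTF {n : ℕ} (d : Fin n → ℝ) (S : ℝ) (k : ℕ) : ℕ :=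
  sInf {q | ∃ B : Fin q → Finset (Fin n),
    (∀ j, ∑ i ∈ B j, d i ≤ S) ∧
    (∀ i, (Finset.univ.filter fun j => i ∈ B j).card = k)}


section Aux

lemma countP_eq_card_filter_get {n : ℕ} (l : List (Finset (Fin n))) (p : Finset (Fin n) → Bool) :
    l.countP p = (Finset.univ.filter fun j : Fin l.length => p (l.get j) = true).card := by
  induction l with
  | nil => simp
  | cons a t ih =>
      rw [List.countP_cons, ih, Finset.card_filter, Finset.card_filter]
      simp only [List.length_cons]
      rw [Fin.sum_univ_succ]
      simp [add_comm]
      split_ifs <;> simp_all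

lemma countP_eq_card_filter_get' {n : ℕ} (l : List (Finset (Fin n)))
    (p : Finset (Fin n) → Prop) [DecidablePred p] :
    l.countP (fun b => decide (p b)) = (Finset.univ.filter fun j : Fin l.length => p (l.get j)).card := by
  rw [countP_eq_card_filter_get]
  congr 1
  apply Finset.filter_congr
  intro j _
  simp

lemma total_load {n q k : ℕ} (d : Fin n → ℝ) (B : Fin q → Finset (Fin n))
    (hB : ∀ i, (Finset.univ.filter fun j => i ∈ B j).card = k) :
    ∑ j, ∑ i ∈ B j, d i = k * ∑ i, d i := by
  have h1 : ∀ j : Fin q, ∑ i ∈ B j, d i = ∑ i : Fin n, if i ∈ B j then d i else 0 := by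
    intro j
    rw [Finset.sum_ite_mem, Finset.univ_inter]
  calc ∑ j, ∑ i ∈ B j, d i = ∑ j : Fin q, ∑ i : Fin n, if i ∈ B j then d i else 0 := by
        simp_rw [h1]
    _ = ∑ i : Fin n, ∑ j : Fin q, if i ∈ B j then d i else 0 := Finset.sum_comm
    _ = ∑ i : Fin n, ((Finset.univ.filter fun j => i ∈ B j).card : ℝ) * d i := by
        refine Finset.sum_congr rfl fun i _ => ?_
        rw [← Finset.sum_filter, Finset.sum_const, nsmul_eq_mul]
    _ = k * ∑ i, d i := by
        rw [Finset.mul_sum]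
        exact Finset.sum_congr rfl fun i _ => by rw [hB i]

lemma kOPT_spec {n : ℕ} (d : Fin n → ℝ) (S : ℝ) (hd : ∀ i, 0 < d i ∧ d i ≤ S) (k : ℕ) :
    ∃ B : Fin (kOPTF d S k) → Finset (Fin n),
      (∀ j, ∑ i ∈ B j, d i ≤ S) ∧
      (∀ i, (Finset.univ.filter fun j => i ∈ B j).card = k) := by
  have hne : {q | ∃ B : Fin q → Finset (Fin n),
      (∀ j, ∑ i ∈ B j, d i ≤ S) ∧
      (∀ i, (Finset.univ.filter fun j => i ∈ B j).card = k)}.Nonempty := by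
    refine ⟨n * k, fun j => {(finProdFinEquiv.symm j).1}, fun j => ?_, fun i => ?_⟩
    · simpa using (hd _).2
    · simp only [Finset.mem_singleton]
      have hcard : (Finset.univ.filter fun j : Fin (n*k) => i = (finProdFinEquiv.symm j).1).card
          = (Finset.univ : Finset (Fin k)).card := by
        refine Finset.card_bij' (fun j _ => (finProdFinEquiv.symm j).2)
          (fun x _ => finProdFinEquiv (i, x)) ?_ ?_ ?_ ?_
        · intro a ha; exact Finset.mem_univ _
        · intro x _
          simp only [Finset.mem_filter, Finset.mem_univ, true_and]
          exact (congrArg Prod.fst (finProdFinEquiv.symm_apply_apply (i, x))).symm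
        · intro a ha
          simp only [Finset.mem_filter] at ha
          obtain ⟨-, h2⟩ := ha
          subst h2
          exact finProdFinEquiv.apply_symm_apply a
        · intro x _
          exact congrArg Prod.snd (finProdFinEquiv.symm_apply_apply (i, x))
      rw [hcard]
      simp
  exact Nat.sInf_mem hne

lemma part1 {n : ℕ} (d : Fin n → ℝ) (S ε : ℝ) (hS : 0 < S)
    (hε : 0 < ε ∧ ε ≤ 1/2) (hd : ∀ i, 0 < d i ∧ d i ≤ S) (k : ℕ) :
    ∀ (q : ℕ) (B : Fin q → Finset (Fin n)),
      (∀ j, ∑ i ∈ B j, d i ≤ S) →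
      (∀ i, (Finset.univ.filter fun j => i ∈ B j).card = k) →
      (∃ T : Finset (Fin q), q - k ≤ T.card ∧
        ∀ j ∈ T, (1 - ε) * S ≤ ∑ i ∈ B j, d i) →
      (q : ℝ) ≤ (1 + 2*ε) * (kOPTF d S k : ℝ) + k := by
  intro q B hload hcount ⟨T, hTcard, hT⟩
  set OPT := kOPTF d S k with hOPT
  obtain ⟨B', hload', hcount'⟩ := kOPT_spec d S hd k
  have h1 : ∑ j, ∑ i ∈ B j, d i = k * ∑ i, d i := total_load d B hcount
  have h2 : ∑ j, ∑ i ∈ B' j, d i = k * ∑ i, d i := total_load d B' hcount'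
  have h3 : (k : ℝ) * ∑ i, d i ≤ OPT * S := by
    rw [← h2]
    calc ∑ j, ∑ i ∈ B' j, d i ≤ ∑ _j : Fin OPT, S := Finset.sum_le_sum fun j _ => hload' j
      _ = OPT * S := by simp [mul_comm]
  have h4 : (T.card : ℝ) * ((1 - ε) * S) ≤ k * ∑ i, d i := by
    rw [← h1]
    calc (T.card : ℝ) * ((1 - ε) * S) = ∑ _j ∈ T, (1 - ε) * S := by simp [mul_comm]
      _ ≤ ∑ j ∈ T, ∑ i ∈ B j, d i := Finset.sum_le_sum hT
      _ ≤ ∑ j, ∑ i ∈ B j, d i := by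
          refine Finset.sum_le_sum_of_subset_of_nonneg (Finset.subset_univ T) ?_
          intro j _ _
          exact Finset.sum_nonneg fun i _ => (hd i).1.le
  have h5 : (T.card : ℝ) * (1 - ε) ≤ OPT := by
    have := h4.trans h3
    nlinarith
  have h6 : (T.card : ℝ) ≤ (1 + 2*ε) * OPT := by
    have hO : (0:ℝ) ≤ OPT := Nat.cast_nonneg _
    nlinarith [mul_nonneg hO (mul_nonneg hε.1.le (by linarith [hε.2] : (0:ℝ) ≤ 1 - 2*ε))]
  have h7 : (q : ℝ) ≤ T.card + k := by
    have : q ≤ T.card + k := by omega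
    exact_mod_cast this
  linarith

lemma ite_mono {P Q : Prop} [Decidable P] [Decidable Q] (h : P → Q) :
    (if P then 1 else 0 : ℕ) ≤ if Q then 1 else 0 := by
  by_cases hp : P
  · rw [if_pos hp, if_pos (h hp)]
  · simp [hp]

lemma ite_comm_eq {α} [DecidableEq α] (a b : α) :
    (if a = b then 1 else 0 : ℕ) = if b = a then 1 else 0 := by
  by_cases h : a = b
  · subst h; rfl
  · rw [if_neg h, if_neg fun hh => h hh.symm]

lemma ff_loads {n : ℕ} (d : Fin n → ℝ) (S : ℝ) (i : Fin n) (hdi : d i ≤ S) :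
    ∀ bs : List (Finset (Fin n)), (∀ b ∈ bs, ∑ j ∈ b, d j ≤ S) →
      ∀ b ∈ ffInsertF d S i bs, ∑ j ∈ b, d j ≤ S := by
  intro bs
  induction bs with
  | nil =>
      intro _ b hb
      simp only [ffInsertF, List.mem_singleton] at hb
      subst hb; simpa using hdi
  | cons a t ih =>
      intro h b hb
      simp only [ffInsertF] at hb
      split_ifs at hb with hc
      · rcases List.mem_cons.1 hb with hb | hb
        · subst hb
          rw [Finset.sum_insert hc.2]
          linarith [hc.1]
        · exact h b (List.mem_cons_of_mem _ hb)
      · rcases List.mem_cons.1 hb with hb | hb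
        · subst hb; exact h b List.mem_cons_self
        · exact ih (fun b hb => h b (List.mem_cons_of_mem _ hb)) b hb

lemma ff_count {n : ℕ} (d : Fin n → ℝ) (S : ℝ) (i i' : Fin n) :
    ∀ bs : List (Finset (Fin n)),
      (ffInsertF d S i bs).countP (fun b => decide (i' ∈ b)) =
        bs.countP (fun b => decide (i' ∈ b)) + (if i' = i then 1 else 0) := by
  intro bs
  induction bs with
  | nil => by_cases h : i' = i <;> simp [ffInsertF, h]
  | cons a t ih =>
      simp only [ffInsertF]
      by_cases h : (∑ j ∈ a, d j) + d i ≤ S ∧ i ∉ a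
      · rw [if_pos h, List.countP_cons, List.countP_cons]
        by_cases h' : i' = i
        · subst h'
          simp [h.2, Finset.mem_insert]
        · have hmem : (i' ∈ insert i a) ↔ (i' ∈ a) := by simp [Finset.mem_insert, h']
          simp only [decide_eq_true_eq, hmem, if_neg h']
          omega
      · rw [if_neg h, List.countP_cons, List.countP_cons, ih]
        omega

lemma ff_main {n : ℕ} (d : Fin n → ℝ) (S ε : ℝ) (i : Fin n)
    (hdi0 : 0 ≤ d i) (hdi : d i ≤ ε * S) :
    ∀ bs : List (Finset (Fin n)),
    ((ffInsertF d S i bs).length = bs.length ∧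
      (ffInsertF d S i bs).countP (fun b => decide (∑ j ∈ b, d j < (1-ε)*S)) ≤
        bs.countP (fun b => decide (∑ j ∈ b, d j < (1-ε)*S))) ∨
    ((ffInsertF d S i bs).length = bs.length + 1 ∧
      (ffInsertF d S i bs).countP (fun b => decide (∑ j ∈ b, d j < (1-ε)*S)) ≤
        bs.countP (fun b => decide (i ∈ b)) + 1) := by
  intro bs
  induction bs with
  | nil =>
      right
      refine ⟨by simp [ffInsertF], ?_⟩
      show List.countP _ [{i}] ≤ _
      exact le_trans List.countP_le_length (by simp)
  | cons a t ih =>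
      simp only [ffInsertF]
      by_cases h : (∑ j ∈ a, d j) + d i ≤ S ∧ i ∉ a
      · rw [if_pos h]
        left
        refine ⟨by simp, ?_⟩
        rw [List.countP_cons, List.countP_cons]
        have himp : (∑ j ∈ insert i a, d j < (1-ε)*S) → (∑ j ∈ a, d j < (1-ε)*S) := by
          rw [Finset.sum_insert h.2]
          intro hlt; linarith
        simp only [decide_eq_true_eq]
        exact Nat.add_le_add le_rfl (ite_mono himp)
      · rw [if_neg h]
        push_neg at h
        rcases ih with ⟨hlen, hcnt⟩ | ⟨hlen, hcnt⟩
        · left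
          refine ⟨by simp [hlen], ?_⟩
          rw [List.countP_cons, List.countP_cons]
          exact Nat.add_le_add hcnt le_rfl
        · right
          refine ⟨by simp [hlen], ?_⟩
          rw [List.countP_cons, List.countP_cons]
          have himp : (∑ j ∈ a, d j < (1-ε)*S) → (i ∈ a) := by
            intro hlt
            exact h (by linarith)
          simp only [decide_eq_true_eq]
          have := ite_mono himp
          omega

lemma fold_inv {n : ℕ} (d : Fin n → ℝ) (S ε : ℝ) (hd : ∀ i, 0 < d i ∧ d i ≤ S)
    (k L : ℕ) :
    ∀ (ord : List (Fin n)) (bs : List (Finset (Fin n))),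
      (∀ i ∈ ord, d i ≤ ε * S) →
      (∀ b ∈ bs, ∑ j ∈ b, d j ≤ S) →
      (∀ i : Fin n, d i ≤ ε * S → bs.countP (fun b => decide (i ∈ b)) + ord.count i = k) →
      (bs.countP (fun b => decide (∑ j ∈ b, d j < (1-ε)*S)) ≤ k ∨ bs.length ≤ L) →
      (∀ b ∈ ord.foldl (fun bs i => ffInsertF d S i bs) bs, ∑ j ∈ b, d j ≤ S) ∧
      (∀ i : Fin n,
        (ord.foldl (fun bs i => ffInsertF d S i bs) bs).countP (fun b => decide (i ∈ b)) =
          bs.countP (fun b => decide (i ∈ b)) + ord.count i) ∧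
      ((ord.foldl (fun bs i => ffInsertF d S i bs) bs).countP
          (fun b => decide (∑ j ∈ b, d j < (1-ε)*S)) ≤ k ∨
        (ord.foldl (fun bs i => ffInsertF d S i bs) bs).length ≤ L) := by
  intro ord
  induction ord with
  | nil =>
      intro bs _ hload hcnt hlight
      exact ⟨hload, fun i => by simp, hlight⟩
  | cons i t ih =>
      intro bs hord hload hcnt hlight
      have hι : d i ≤ ε * S := hord i List.mem_cons_self
      have hstep : List.foldl (fun bs i => ffInsertF d S i bs) bs (i :: t) =
          List.foldl (fun bs i => ffInsertF d S i bs) (ffInsertF d S i bs) t := rfl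
      set bs' := ffInsertF d S i bs with hbs'
      have hload' : ∀ b ∈ bs', ∑ j ∈ b, d j ≤ S := ff_loads d S i (hd i).2 bs hload
      have hcnt' : ∀ i' : Fin n, d i' ≤ ε * S →
          bs'.countP (fun b => decide (i' ∈ b)) + t.count i' = k := by
        intro i' hi'
        have := hcnt i' hi'
        rw [List.count_cons] at this
        simp only [beq_iff_eq, ite_comm_eq i i'] at this
        rw [ff_count d S i i' bs]
        omega
      have hik : bs.countP (fun b => decide (i ∈ b)) + 1 ≤ k := by
        have := hcnt i hι
        rw [List.count_cons_self] at this
        omega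
      have hlight' : bs'.countP (fun b => decide (∑ j ∈ b, d j < (1-ε)*S)) ≤ k ∨
          bs'.length ≤ L := by
        rcases ff_main d S ε i (hd i).1.le hι bs with ⟨hlen, hle⟩ | ⟨hlen, hle⟩
        · rcases hlight with hl | hl
          · exact Or.inl (hle.trans hl)
          · exact Or.inr (hlen ▸ hl)
        · exact Or.inl (hle.trans hik)
      have hres := ih bs' (fun i' hi' => hord i' (List.mem_cons_of_mem _ hi')) hload' hcnt' hlight'
      rw [hstep]
      refine ⟨hres.1, ?_, hres.2.2⟩
      intro i'
      rw [hres.2.1 i', ff_count d S i i' bs, List.count_cons]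
      simp only [beq_iff_eq, ite_comm_eq i i']
      omega

end Aux

/-- Let `0 < ε ≤ 1/2`, `S > 0`, `k ≥ 1` and item sizes in `(0,S]`.
(1) If a `k`-times packing of `D_k` uses `B` bins, at least `B - k` of which have
total size at least `(1-ε)·S`, then `B ≤ (1+2ε)·OPT(D_k) + k`.
(2) Consequently, if the large items (size `> ε·S`) are packed (`k` copies each)
into `L` bins and the small items (size `≤ ε·S`) are then added greedily by
First-Fit insertion (each copy into an existing bin with enough room not already
containing another copy of the same item, opening a bin only when needed), the
resulting packing of `D_k` uses at most `max{L, (1+2ε)·OPT(D_k) + k}` bins. -/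
theorem stmt_11 {n : ℕ} (d : Fin n → ℝ) (S ε : ℝ) (hS : 0 < S)
    (hε : 0 < ε ∧ ε ≤ 1/2) (hd : ∀ i, 0 < d i ∧ d i ≤ S) (k : ℕ) (hk : 1 ≤ k) :
    (∀ (q : ℕ) (B : Fin q → Finset (Fin n)),
      (∀ j, ∑ i ∈ B j, d i ≤ S) →
      (∀ i, (Finset.univ.filter fun j => i ∈ B j).card = k) →
      (∃ T : Finset (Fin q), q - k ≤ T.card ∧
        ∀ j ∈ T, (1 - ε) * S ≤ ∑ i ∈ B j, d i) →
      (q : ℝ) ≤ (1 + 2*ε) * (kOPTF d S k : ℝ) + k) ∧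
    (∀ (L : ℕ) (bins0 : List (Finset (Fin n))) (order : List (Fin n)),
      bins0.length = L →
      (∀ b ∈ bins0, ∑ i ∈ b, d i ≤ S) →
      (∀ i : Fin n, ε * S < d i → (bins0.countP fun b => decide (i ∈ b)) = k) →
      (∀ i : Fin n, d i ≤ ε * S → (bins0.countP fun b => decide (i ∈ b)) = 0) →
      (∀ i : Fin n, d i ≤ ε * S → order.count i = k) →
      (∀ i : Fin n, ε * S < d i → order.count i = 0) →
      ((order.foldl (fun bs i => ffInsertF d S i bs) bins0).length : ℝ) ≤
        max (L : ℝ) ((1 + 2*ε) * (kOPTF d S k : ℝ) + k)) := by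
  constructor
  · exact part1 d S ε hS hε hd k
  · intro L bins0 order hlen hload hlarge hsmall0 hsmallcnt hlargecnt
    have hord : ∀ i ∈ order, d i ≤ ε * S := by
      intro i hi
      by_contra hcon
      push_neg at hcon
      have h0 := hlargecnt i hcon
      have := List.count_pos_iff.2 hi
      omega
    have hinit_cnt : ∀ i : Fin n, d i ≤ ε * S →
        bins0.countP (fun b => decide (i ∈ b)) + order.count i = k := by
      intro i hi
      rw [hsmall0 i hi, hsmallcnt i hi, zero_add]
    have hfold := fold_inv d S ε hd k L order bins0 hord hload hinit_cnt
      (Or.inr (le_of_eq hlen))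
    set res := order.foldl (fun bs i => ffInsertF d S i bs) bins0 with hres
    obtain ⟨hL2, hC2, hdisj⟩ := hfold
    rcases hdisj with hlight | hlen2
    · have hcnt_res : ∀ i : Fin n, res.countP (fun b => decide (i ∈ b)) = k := by
        intro i
        rcases le_or_gt (d i) (ε*S) with h | h
        · rw [hC2 i, hsmall0 i h, hsmallcnt i h, zero_add]
        · rw [hC2 i, hlarge i h, hlargecnt i h, add_zero]
      have hBcnt : ∀ i : Fin n,
          (Finset.univ.filter fun j : Fin res.length => i ∈ res.get j).card = k := by
        intro i
        have h := countP_eq_card_filter_get' res (fun b => i ∈ b)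
        rw [hcnt_res i] at h
        exact h.symm
      have hBload : ∀ j : Fin res.length, ∑ i ∈ res.get j, d i ≤ S := by
        intro j
        exact hL2 _ (res.get_mem j)
      have hlightcard :
          (Finset.univ.filter fun j : Fin res.length =>
            ∑ i ∈ res.get j, d i < (1-ε)*S).card ≤ k := by
        rw [← countP_eq_card_filter_get' res (fun b => ∑ i ∈ b, d i < (1-ε)*S)]
        exact hlight
      have hsplit := Finset.card_filter_add_card_filter_not
        (s := (Finset.univ : Finset (Fin res.length)))
        (p := fun j => ∑ i ∈ res.get j, d i < (1-ε)*S)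
      have hTcard : res.length - k ≤
          (Finset.univ.filter fun j : Fin res.length =>
            ¬ (∑ i ∈ res.get j, d i < (1-ε)*S)).card := by
        rw [Finset.card_univ, Fintype.card_fin] at hsplit
        omega
      have hb := part1 d S ε hS hε hd k res.length (fun j => res.get j) hBload hBcnt
        ⟨Finset.univ.filter fun j : Fin res.length =>
            ¬ (∑ i ∈ res.get j, d i < (1-ε)*S), hTcard, by
          intro j hj
          rw [Finset.mem_filter] at hj
          exact le_of_not_gt hj.2⟩
      exact le_trans hb (le_max_right _ _)
    · exact le_trans (Nat.cast_le.2 hlen2) (le_max_left _ _)
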